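/- Let K be a field. The ℤ-graded rings M_3(K[x^2,x^{-2}])(0,1,1) and M_3(K[x^2,x^{-2}])(0,1,2) are graded isomorphic. -/

import Mathlib

open LaurentPolynomial

def LComp (K : Type*) [Field K] (m : ℕ) (d : ℤ) : Set (LaurentPolynomial K) :=
  {p | ((m : ℤ) ∣ d ∧ ∃ a : K, p = C a * T (d / (m : ℤ))) ∨ (¬ (m : ℤ) ∣ d ∧ p = 0)}

def LMatComp (K : Type*) [Field K] (m : ℕ) {n : ℕ} (γ : Fin n → ℤ) (d : ℤ) :
    Set (Matrix (Fin n) (Fin n) (LaurentPolynomial K)) :=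
  {x | ∀ i j, x i j ∈ LComp K m (d + γ j - γ i)}

set_option linter.unnecessarySimpa false
namespace Stmt13Aux

variable {K : Type*} [Field K]

lemma mem_shift {e : ℤ} {p : LaurentPolynomial K} (c c' : ℤ)
    (h : p ∈ LComp K 2 e) : T c * p * T c' ∈ LComp K 2 (e + 2*c + 2*c') := by
  simp only [LComp, Set.mem_setOf_eq, Nat.cast_ofNat] at h ⊢
  rcases h with ⟨⟨k, hk⟩, a, rfl⟩ | ⟨hnd, rfl⟩
  · left
    refine ⟨⟨k + c + c', by omega⟩, a, ?_⟩
    have h1 : T c * (C a * T (e / 2)) * T c' = C a * T (c + e / 2 + c') := by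
      rw [T_add, T_add]; ring
    rw [h1]
    congr 2
    omega
  · right
    exact ⟨by omega, by ring⟩

def sf : Fin 3 → Fin 3 := ![1, 0, 2]

lemma sfsf : ∀ i, sf (sf i) = i := by decide

lemma Tcancel (x y : ℤ) (p : LaurentPolynomial K) :
    T (-x) * (T x * p * T (-y)) * T y = p := by
  have h1 : T (-x) * T x = (1 : LaurentPolynomial K) := by rw [← T_add]; simp
  have h2 : T (-y) * T y = (1 : LaurentPolynomial K) := by rw [← T_add]; simp
  calc T (-x) * (T x * p * T (-y)) * T y
      = (T (-x) * T x) * p * (T (-y) * T y) := by ring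
    _ = p := by rw [h1, h2, one_mul, mul_one]

def av : Fin 3 → ℤ := ![1, 0, 0]

noncomputable def φ (K : Type*) [Field K] :
    Matrix (Fin 3) (Fin 3) (LaurentPolynomial K) ≃+*
      Matrix (Fin 3) (Fin 3) (LaurentPolynomial K) where
  toFun A := fun i j => T (av i) * A (sf i) (sf j) * T (-(av j))
  invFun B := fun i j => T (-(av (sf i))) * B (sf i) (sf j) * T (av (sf j))
  left_inv A := by
    funext i j
    simp only [sfsf]
    exact Tcancel _ _ _
  right_inv B := by
    funext i j
    simp only [sfsf]
    have := Tcancel (-(av i)) (-(av j)) (B i j)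
    simpa using this
  map_add' A B := by
    funext i j
    simp [Matrix.add_apply]
    show _ = A (sf i) (sf j) * _ + B (sf i) (sf j) * _
    ring
  map_mul' A B := by
    funext i j
    show T (av i) * ((A * B) (sf i) (sf j)) * T (-(av j)) = _
    have hbij : Function.Bijective sf := by decide
    rw [Matrix.mul_apply, ← Function.Bijective.sum_comp hbij
      (fun k => A (sf i) k * B k (sf j))]
    show _ = ∑ k, (T (av i) * A (sf i) (sf k) * T (-(av k))) *
        (T (av k) * B (sf k) (sf j) * T (-(av j)))
    rw [Finset.mul_sum, Finset.sum_mul]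
    refine Finset.sum_congr rfl fun k _ => ?_
    have h1 : T (-(av k)) * T (av k) = (1 : LaurentPolynomial K) := by
      rw [← T_add]; simp
    have h2 : (T (av i) * A (sf i) (sf k) * T (-(av k))) *
        (T (av k) * B (sf k) (sf j) * T (-(av j)))
        = T (av i) * (A (sf i) (sf k) * B (sf k) (sf j)) * T (-(av j)) *
          (T (-(av k)) * T (av k)) := by ring
    rw [h2, h1, mul_one]

theorem main (K : Type*) [Field K] :
    ∃ φ : Matrix (Fin 3) (Fin 3) (LaurentPolynomial K) ≃+*
        Matrix (Fin 3) (Fin 3) (LaurentPolynomial K),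
      ∀ d : ℤ, φ '' LMatComp K 2 ![0, 1, 1] d = LMatComp K 2 ![0, 1, 2] d := by
  refine ⟨φ K, fun d => ?_⟩
  ext B
  constructor
  · rintro ⟨A, hA, rfl⟩ i j
    have h := mem_shift (K := K) (av i) (-(av j)) (hA (sf i) (sf j))
    have hdeg : d + ![(0:ℤ), 1, 1] (sf j) - ![(0:ℤ), 1, 1] (sf i) + 2*(av i) + 2*(-(av j))
        = d + ![(0:ℤ), 1, 2] j - ![(0:ℤ), 1, 2] i := by
      fin_cases i <;> fin_cases j <;> simp [sf, av] <;> ring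
    rw [hdeg] at h
    exact h
  · intro hB
    refine ⟨(φ K).symm B, fun i j => ?_, (φ K).apply_symm_apply B⟩
    have hs : (φ K).symm B i j = T (-(av (sf i))) * B (sf i) (sf j) * T (av (sf j)) := rfl
    rw [hs]
    have h := mem_shift (K := K) (-(av (sf i))) (av (sf j)) (hB (sf i) (sf j))
    have hdeg : d + ![(0:ℤ), 1, 2] (sf j) - ![(0:ℤ), 1, 2] (sf i) + 2*(-(av (sf i))) + 2*(av (sf j))
        = d + ![(0:ℤ), 1, 1] j - ![(0:ℤ), 1, 1] i := by
      fin_cases i <;> fin_cases j <;> simp [sf, av] <;> ring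
    rw [hdeg] at h
    exact h

end Stmt13Aux

theorem stmt13 (K : Type*) [Field K] :
    ∃ φ : Matrix (Fin 3) (Fin 3) (LaurentPolynomial K) ≃+*
        Matrix (Fin 3) (Fin 3) (LaurentPolynomial K),
      ∀ d : ℤ, φ '' LMatComp K 2 ![0, 1, 1] d = LMatComp K 2 ![0, 1, 2] d :=
  Stmt13Aux.main K
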